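/- If A, B, C are n×n complex matrices such that [[A, B], [B*, C]] is positive semidefinite, then for every j, s_j(B) ≤ s_j(A ⊕ C), where A ⊕ C denotes the block diagonal matrix diag(A, C). -/

import Mathlib

open Matrix
open scoped ComplexOrder

/-- The `j`-th largest singular value of a square complex matrix (`j : Fin m`, zero-indexed,
so `sv A 0` is the largest singular value). It is defined as the square root of the `j`-th
largest eigenvalue of `Aᴴ * A`. -/
noncomputable def sv {m : ℕ} (A : Matrix (Fin m) (Fin m) ℂ) (j : Fin m) : ℝ :=
  Real.sqrt ((Matrix.isHermitian_conjTranspose_mul_self A).eigenvalues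
    (Tuple.sort ((Matrix.isHermitian_conjTranspose_mul_self A).eigenvalues) j.rev))

/-- The positive semidefinite square root of a positive semidefinite matrix
(the definition of `Matrix.PosSemidef.sqrt` in the older Mathlib). -/
noncomputable def Matrix.PosSemidef.sqrt {m : ℕ} {A : Matrix (Fin m) (Fin m) ℂ}
    (hA : A.PosSemidef) : Matrix (Fin m) (Fin m) ℂ :=
  hA.1.eigenvectorUnitary.1 * diagonal ((↑) ∘ (√·) ∘ hA.1.eigenvalues) *
  (star hA.1.eigenvectorUnitary : Matrix (Fin m) (Fin m) ℂ)

theorem Matrix.PosSemidef.posSemidef_sqrt {m : ℕ} {A : Matrix (Fin m) (Fin m) ℂ}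
    (hA : A.PosSemidef) : hA.sqrt.PosSemidef := by
  unfold Matrix.PosSemidef.sqrt
  have h := (Matrix.PosSemidef.diagonal (R := ℂ) (n := Fin m)
    (d := ((↑) ∘ (√·) ∘ hA.1.eigenvalues : Fin m → ℂ)) (fun i => by
      simp only [Pi.zero_apply, Function.comp_apply]
      exact_mod_cast Real.sqrt_nonneg _)).mul_mul_conjTranspose_same
    (hA.1.eigenvectorUnitary.1)
  simpa [Matrix.star_eq_conjTranspose] using h

/-- The absolute value `|A| = (Aᴴ A)^{1/2}` of a square complex matrix. -/
noncomputable def matAbs {m : ℕ} (A : Matrix (Fin m) (Fin m) ℂ) : Matrix (Fin m) (Fin m) ℂ :=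
  (Matrix.posSemidef_conjTranspose_mul_self A).sqrt

/-- The `2n × 2n` block matrix `[[A, B], [C, D]]`, reindexed by `Fin (n + n)`. -/
noncomputable def blk {n : ℕ} (A B C D : Matrix (Fin n) (Fin n) ℂ) :
    Matrix (Fin (n + n)) (Fin (n + n)) ℂ :=
  Matrix.reindex finSumFinEquiv finSumFinEquiv (Matrix.fromBlocks A B C D)

/-- `f(P)` for a Hermitian matrix `P`, via the spectral functional calculus. -/
noncomputable def herCfc {m : ℕ} {P : Matrix (Fin m) (Fin m) ℂ} (hP : P.IsHermitian)
    (f : ℝ → ℝ) : Matrix (Fin m) (Fin m) ℂ :=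
  hP.cfc f

/-- `|A| ^ r` (real power of the absolute value), via the functional calculus. -/
noncomputable def matAbsPow {m : ℕ} (A : Matrix (Fin m) (Fin m) ℂ) (r : ℝ) :
    Matrix (Fin m) (Fin m) ℂ :=
  herCfc (Matrix.posSemidef_conjTranspose_mul_self A).posSemidef_sqrt.1 (fun t => t ^ r)

/-- `f(|A|)`, via the functional calculus. -/
noncomputable def matAbsCfc {m : ℕ} (A : Matrix (Fin m) (Fin m) ℂ) (f : ℝ → ℝ) :
    Matrix (Fin m) (Fin m) ℂ :=
  herCfc (Matrix.posSemidef_conjTranspose_mul_self A).posSemidef_sqrt.1 f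

/-- The operator norm: the largest singular value. -/
noncomputable def opNorm {m : ℕ} (A : Matrix (Fin m) (Fin m) ℂ) : ℝ :=
  ⨆ j, sv A j

/-! ### Auxiliary material for the proof -/

section RayleighAux

variable {E : Type*} [NormedAddCommGroup E] [InnerProductSpace ℂ E]
variable {ι : Type*} [Fintype ι]

private lemma rayleigh_coords (T : E →ₗ[ℂ] E) (u : ι → E) (hu : Orthonormal ℂ u)
    (d : ι → ℝ) (hT : ∀ i, T (u i) = (d i : ℂ) • u i)
    {x : E} (hx : x ∈ Submodule.span ℂ (Set.range u)) :
    ∃ a : ι → ℝ, (∀ i, 0 ≤ a i) ∧ ∑ i, a i = ‖x‖ ^ 2 ∧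
      (inner ℂ x (T x) : ℂ).re = ∑ i, d i * a i := by
  obtain ⟨c, hc⟩ := (Submodule.mem_span_range_iff_exists_fun ℂ).mp hx
  have key : ∀ z : ℂ, (starRingEnd ℂ) z * z = ((‖z‖ ^ 2 : ℝ) : ℂ) := fun z => by
    rw [RCLike.conj_mul z]; push_cast; rfl
  refine ⟨fun i => ‖c i‖ ^ 2, fun i => by positivity, ?_, ?_⟩
  · have h1 : (inner ℂ x x : ℂ) = ∑ i, (starRingEnd ℂ) (c i) * c i := by
      rw [← hc]; exact hu.inner_sum c c Finset.univ
    have h2 : ((‖x‖ : ℝ) : ℂ) ^ 2 = inner ℂ x x := (inner_self_eq_norm_sq_to_K x).symm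
    have h3 : (‖x‖ ^ 2 : ℝ) = (inner ℂ x x : ℂ).re := by
      rw [← h2, ← Complex.ofReal_pow, Complex.ofReal_re]
    rw [h3, h1, Complex.re_sum]
    refine Finset.sum_congr rfl fun i _ => ?_
    rw [key (c i), Complex.ofReal_re]
  · have hTx : T x = ∑ i, (c i * (d i : ℂ)) • u i := by
      rw [← hc, map_sum]
      refine Finset.sum_congr rfl fun i _ => ?_
      rw [LinearMap.map_smul, hT i, smul_smul]
    have h1 : (inner ℂ x (T x) : ℂ) = ∑ i, (starRingEnd ℂ) (c i) * (c i * (d i : ℂ)) := by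
      rw [hTx, ← hc]; exact hu.inner_sum c _ Finset.univ
    rw [h1, Complex.re_sum]
    refine Finset.sum_congr rfl fun i _ => ?_
    rw [← mul_assoc, key (c i), ← Complex.ofReal_mul, Complex.ofReal_re]
    ring

private lemma le_rayleigh (T : E →ₗ[ℂ] E) (u : ι → E) (hu : Orthonormal ℂ u)
    (d : ι → ℝ) (hT : ∀ i, T (u i) = (d i : ℂ) • u i) {c : ℝ} (hc : ∀ i, c ≤ d i)
    {x : E} (hx : x ∈ Submodule.span ℂ (Set.range u)) :
    c * ‖x‖ ^ 2 ≤ (inner ℂ x (T x) : ℂ).re := by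
  obtain ⟨a, ha0, han, har⟩ := rayleigh_coords T u hu d hT hx
  rw [har, ← han, Finset.mul_sum]
  exact Finset.sum_le_sum fun i _ => mul_le_mul_of_nonneg_right (hc i) (ha0 i)

private lemma rayleigh_le (T : E →ₗ[ℂ] E) (u : ι → E) (hu : Orthonormal ℂ u)
    (d : ι → ℝ) (hT : ∀ i, T (u i) = (d i : ℂ) • u i) {c : ℝ} (hc : ∀ i, d i ≤ c)
    {x : E} (hx : x ∈ Submodule.span ℂ (Set.range u)) :
    (inner ℂ x (T x) : ℂ).re ≤ c * ‖x‖ ^ 2 := by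
  obtain ⟨a, ha0, han, har⟩ := rayleigh_coords T u hu d hT hx
  rw [har, ← han, Finset.mul_sum]
  exact Finset.sum_le_sum fun i _ => mul_le_mul_of_nonneg_right (hc i) (ha0 i)

end RayleighAux

private lemma exists_low_rayleigh {m : ℕ} {P : Matrix (Fin m) (Fin m) ℂ} (hP : P.IsHermitian)
    (j : Fin m) (V : Submodule ℂ (EuclideanSpace ℂ (Fin m)))
    (hV : (j : ℕ) < Module.finrank ℂ V) :
    ∃ x : EuclideanSpace ℂ (Fin m), x ∈ V ∧ x ≠ 0 ∧
      (inner ℂ x (Matrix.toEuclideanLin P x) : ℂ).re ≤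
        hP.eigenvalues (Tuple.sort hP.eigenvalues j.rev) * ‖x‖ ^ 2 := by
  classical
  set σ := Tuple.sort hP.eigenvalues with hσ
  have hrev : ((j.rev : ℕ) + 1) ≤ m := j.rev.2
  set u : Fin ((j.rev : ℕ) + 1) → EuclideanSpace ℂ (Fin m) :=
    fun k => hP.eigenvectorBasis (σ (Fin.castLE hrev k)) with hu
  have hinj : Function.Injective (fun k : Fin ((j.rev : ℕ) + 1) => σ (Fin.castLE hrev k)) :=
    σ.injective.comp (Fin.castLE_injective hrev)
  have huON : Orthonormal ℂ u := (hP.eigenvectorBasis.orthonormal).comp _ hinj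
  set W := Submodule.span ℂ (Set.range u) with hW
  have hWrank : Module.finrank ℂ W = (j.rev : ℕ) + 1 := by
    rw [finrank_span_eq_card huON.linearIndependent]
    simp
  have hsup : Module.finrank ℂ (V ⊔ W : Submodule ℂ (EuclideanSpace ℂ (Fin m))) ≤ m := by
    refine le_trans (Submodule.finrank_le _) ?_
    simp
  have hdim := Submodule.finrank_sup_add_finrank_inf_eq V W
  have hpos : 0 < Module.finrank ℂ (V ⊓ W : Submodule ℂ (EuclideanSpace ℂ (Fin m))) := by
    have hjrev : (j.rev : ℕ) = m - 1 - (j : ℕ) := Fin.val_rev j ▸ by omega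
    have hj := j.2
    omega
  have : Nontrivial (V ⊓ W : Submodule ℂ (EuclideanSpace ℂ (Fin m))) :=
    Module.nontrivial_of_finrank_pos hpos
  obtain ⟨z, hz⟩ := exists_ne (0 : (V ⊓ W : Submodule ℂ (EuclideanSpace ℂ (Fin m))))
  have hzW : (z : EuclideanSpace ℂ (Fin m)) ∈ W := (Submodule.mem_inf.mp z.2).2
  refine ⟨z, (Submodule.mem_inf.mp z.2).1, by simpa using hz, ?_⟩
  refine rayleigh_le (Matrix.toEuclideanLin P) u huON
    (fun k => hP.eigenvalues (σ (Fin.castLE hrev k))) ?_ ?_ hzW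
  · intro k
    have h := hP.mulVec_eigenvectorBasis (σ (Fin.castLE hrev k))
    rw [RCLike.real_smul_eq_coe_smul (K := ℂ)] at h
    exact WithLp.ofLp_injective 2 h
  · intro k
    have hk : Fin.castLE hrev k ≤ j.rev := by
      rw [Fin.le_def]
      exact Nat.lt_succ_iff.mp k.2
    exact Tuple.monotone_sort hP.eigenvalues hk

private def glue {n : ℕ} (a b : Fin n → ℂ) : Fin (n + n) → ℂ :=
  fun i => Sum.elim a b (finSumFinEquiv.symm i)

private lemma star_glue {n : ℕ} (a b : Fin n → ℂ) :
    star (glue a b) = glue (star a) (star b) := by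
  funext i
  simp only [glue, Pi.star_apply]
  cases finSumFinEquiv.symm i <;> simp

private lemma smul_glue {n : ℕ} (z : ℂ) (a b : Fin n → ℂ) :
    z • glue a b = glue (z • a) (z • b) := by
  funext i
  simp only [glue, Pi.smul_apply]
  cases finSumFinEquiv.symm i <;> simp

private lemma glue_dotProduct {n : ℕ} (a b c d : Fin n → ℂ) :
    glue a b ⬝ᵥ glue c d = a ⬝ᵥ c + b ⬝ᵥ d := by
  simp only [dotProduct, glue]
  rw [Fintype.sum_equiv finSumFinEquiv.symm
    (fun i => Sum.elim a b (finSumFinEquiv.symm i) * Sum.elim c d (finSumFinEquiv.symm i))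
    (fun s => Sum.elim a b s * Sum.elim c d s) (fun x => rfl)]
  rw [Fintype.sum_sum_type]
  simp

private lemma blk_mulVec {n : ℕ} (P Q R S : Matrix (Fin n) (Fin n) ℂ) (a b : Fin n → ℂ) :
    blk P Q R S *ᵥ glue a b = glue (P *ᵥ a + Q *ᵥ b) (R *ᵥ a + S *ᵥ b) := by
  have h1 : glue a b ∘ ⇑finSumFinEquiv = Sum.elim a b := by
    funext s; simp [glue]
  rw [blk, Matrix.reindex_apply, Matrix.submatrix_mulVec_equiv, Equiv.symm_symm]
  rw [h1, Matrix.fromBlocks_mulVec]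
  rfl

private lemma eq_glue {n : ℕ} (x : Fin (n + n) → ℂ) :
    x = glue (fun i => x (Fin.castAdd n i)) (fun i => x (Fin.natAdd n i)) := by
  funext i
  obtain ⟨s, rfl⟩ := finSumFinEquiv.surjective i
  simp only [glue, Equiv.symm_apply_apply]
  cases s <;> rfl

private lemma inner_glue {n : ℕ} (a b c d : Fin n → ℂ) :
    (inner ℂ (WithLp.toLp 2 (glue a b)) (WithLp.toLp 2 (glue c d)) : ℂ)
      = star a ⬝ᵥ c + star b ⬝ᵥ d := by
  have h : (inner ℂ (WithLp.toLp 2 (glue a b)) (WithLp.toLp 2 (glue c d)) : ℂ)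
      = star (glue a b) ⬝ᵥ glue c d := by rw [dotProduct_comm]; rfl
  rw [h, star_glue, glue_dotProduct]

private lemma dot_BB {n : ℕ} (B : Matrix (Fin n) (Fin n) ℂ) (p q : Fin n → ℂ) :
    star (B *ᵥ p) ⬝ᵥ (B *ᵥ q) = star p ⬝ᵥ ((Bᴴ * B) *ᵥ q) := by
  rw [star_mulVec, ← Matrix.dotProduct_mulVec, mulVec_mulVec]

private lemma blocks_isHermitian {n : ℕ} {A B C : Matrix (Fin n) (Fin n) ℂ}
    (h : (blk A B Bᴴ C).IsHermitian) : A.IsHermitian ∧ C.IsHermitian := by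
  have h2 : Matrix.fromBlocks Aᴴ B Bᴴ Cᴴ = Matrix.fromBlocks A B Bᴴ C := by
    have h3 := h.eq
    rw [blk] at h3
    rw [Matrix.conjTranspose_reindex, Matrix.fromBlocks_conjTranspose,
      Matrix.conjTranspose_conjTranspose] at h3
    exact (Matrix.reindex finSumFinEquiv finSumFinEquiv).injective h3
  constructor
  · have := congrArg Matrix.toBlocks₁₁ h2
    simpa [Matrix.toBlocks_fromBlocks₁₁, Matrix.IsHermitian] using this
  · have := congrArg Matrix.toBlocks₂₂ h2
    simpa [Matrix.toBlocks_fromBlocks₂₂, Matrix.IsHermitian] using this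

private lemma blkdiag_isHermitian {n : ℕ} {A C : Matrix (Fin n) (Fin n) ℂ}
    (hA : A.IsHermitian) (hC : C.IsHermitian) : (blk A 0 0 C).IsHermitian := by
  rw [Matrix.IsHermitian, blk, Matrix.conjTranspose_reindex, Matrix.fromBlocks_conjTranspose]
  congr 1
  rw [hA.eq, hC.eq]
  simp

private lemma key_ineq {n : ℕ} {A B C : Matrix (Fin n) (Fin n) ℂ}
    (h : (blk A B Bᴴ C).PosSemidef) (x : Fin (n + n) → ℂ) :
    (star x ⬝ᵥ (blk 0 B Bᴴ 0 *ᵥ x)).re ≤ (star x ⬝ᵥ (blk A 0 0 C *ᵥ x)).re := by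
  have hx := eq_glue x
  set a : Fin n → ℂ := fun i => x (Fin.castAdd n i) with ha
  set b : Fin n → ℂ := fun i => x (Fin.natAdd n i) with hb
  have hM := h.dotProduct_mulVec_nonneg (glue a (-b))
  rw [blk_mulVec, star_glue, glue_dotProduct] at hM
  rw [hx, blk_mulVec, blk_mulVec, star_glue, glue_dotProduct, glue_dotProduct]
  simp only [Matrix.zero_mulVec, Matrix.mulVec_neg, zero_add, add_zero, star_neg,
    dotProduct_add, dotProduct_neg, neg_dotProduct] at hM ⊢
  have h0 : (0:ℂ).re ≤ _ := (Complex.le_def.mp hM).1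
  simp only [Complex.add_re, Complex.neg_re, Complex.sub_re, Complex.zero_re] at h0 ⊢
  linarith

set_option maxHeartbeats 2000000 in
theorem offdiagonal_dominated {n : ℕ} (A B C : Matrix (Fin n) (Fin n) ℂ)
    (h : (blk A B Bᴴ C).PosSemidef) :
    ∀ j : Fin n, sv B j ≤ sv (blk A 0 0 C) (Fin.castAdd n j) := by
  intro j
  classical
  have hBB := Matrix.isHermitian_conjTranspose_mul_self B
  set t : Fin n → ℝ := fun i => hBB.eigenvalues (Tuple.sort hBB.eigenvalues i.rev) with ht
  have hsvB : sv B j = Real.sqrt (t j) := rfl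
  rcases le_or_gt (t j) 0 with htj | htj
  · rw [hsvB, Real.sqrt_eq_zero_of_nonpos htj]
    exact Real.sqrt_nonneg _
  obtain ⟨hA, hC⟩ := blocks_isHermitian h.1
  have hD : (blk A 0 0 C).IsHermitian := blkdiag_isHermitian hA hC
  set μ : ℝ := hD.eigenvalues (Tuple.sort hD.eigenvalues (Fin.castAdd n j).rev) with hμ
  have hjn : (j : ℕ) + 1 ≤ n := j.2
  set v : Fin ((j : ℕ) + 1) → EuclideanSpace ℂ (Fin n) :=
    fun k => hBB.eigenvectorBasis (Tuple.sort hBB.eigenvalues (Fin.castLE hjn k).rev) with hv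
  set tt : Fin ((j : ℕ) + 1) → ℝ := fun k => t (Fin.castLE hjn k) with htt
  have httj : ∀ k, t j ≤ tt k := by
    intro k
    refine Tuple.monotone_sort hBB.eigenvalues ?_
    rw [Fin.rev_le_rev, Fin.le_def]
    exact Nat.lt_succ_iff.mp k.2
  have httpos : ∀ k, 0 < tt k := fun k => lt_of_lt_of_le htj (httj k)
  set ss : Fin ((j : ℕ) + 1) → ℝ := fun k => Real.sqrt (tt k) with hss
  have hsspos : ∀ k, 0 < ss k := fun k => Real.sqrt_pos.mpr (httpos k)
  have hssj : ∀ k, Real.sqrt (t j) ≤ ss k := fun k => Real.sqrt_le_sqrt (httj k)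
  have hsssq : ∀ k, ss k ^ 2 = tt k := fun k => Real.sq_sqrt (httpos k).le
  set r : Fin ((j : ℕ) + 1) → ℝ := fun k => (Real.sqrt (2 * tt k))⁻¹ with hr
  have hrsq : ∀ k, r k ^ 2 * (2 * tt k) = 1 := by
    intro k
    have h2 : (0:ℝ) < 2 * tt k := by have := httpos k; linarith
    have h3 : Real.sqrt (2 * tt k) ^ 2 = 2 * tt k := Real.sq_sqrt h2.le
    have h5 : r k ^ 2 = (2 * tt k)⁻¹ := by rw [hr]; rw [inv_pow, h3]
    rw [h5, inv_mul_cancel₀ h2.ne']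
  have hvE : ∀ k, (Bᴴ * B) *ᵥ v k = ((tt k : ℝ) : ℂ) • v k := by
    intro k
    have h1 := hBB.mulVec_eigenvectorBasis (Tuple.sort hBB.eigenvalues (Fin.castLE hjn k).rev)
    rw [RCLike.real_smul_eq_coe_smul (K := ℂ)] at h1
    exact h1
  have hvON : Orthonormal ℂ v :=
    (hBB.eigenvectorBasis.orthonormal).comp _
      ((Tuple.sort hBB.eigenvalues).injective.comp
        (Fin.rev_injective.comp (Fin.castLE_injective hjn)))
  have hvdot : ∀ k l, star (⇑(v k)) ⬝ᵥ ⇑(v l) = if k = l then (1:ℂ) else 0 := fun k l => by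
    rw [dotProduct_comm]; exact orthonormal_iff_ite.mp hvON k l
  set vf : Fin ((j : ℕ) + 1) → Fin n → ℂ := fun k => v k with hvf
  have hvfE : ∀ k, (Bᴴ * B) *ᵥ vf k = ((tt k : ℝ) : ℂ) • vf k := fun k => hvE k
  have hvfdot : ∀ k l, star (vf k) ⬝ᵥ vf l = if k = l then (1:ℂ) else 0 := fun k l => hvdot k l
  set w : Fin ((j : ℕ) + 1) → EuclideanSpace ℂ (Fin (n + n)) :=
    fun k => WithLp.toLp 2 (glue (((r k : ℝ) : ℂ) • (B *ᵥ vf k)) (((r k * ss k : ℝ) : ℂ) • vf k)) with hw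
  have hwdot : ∀ k l, (inner ℂ (w k) (w l) : ℂ) = if k = l then (1:ℂ) else 0 := by
    intro k l
    have hBvv : star (B *ᵥ vf k) ⬝ᵥ (B *ᵥ vf l)
        = ((tt l : ℝ) : ℂ) * (if k = l then (1:ℂ) else 0) := by
      rw [dot_BB, hvfE l, dotProduct_smul, smul_eq_mul, hvfdot k l]
    simp only [hw]
    rw [inner_glue]
    simp only [star_smul, smul_dotProduct, dotProduct_smul, smul_eq_mul,
      RCLike.star_def, Complex.conj_ofReal]
    rw [hBvv, hvfdot k l]
    rcases eq_or_ne k l with rfl | hkl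
    · simp only [if_pos rfl, mul_one]
      push_cast
      norm_cast
      nlinarith [hrsq k, hsssq k]
    · simp [if_neg hkl]
  have hwON : Orthonormal ℂ w := orthonormal_iff_ite.mpr hwdot
  have hwE : ∀ k, Matrix.toEuclideanLin (blk 0 B Bᴴ 0) (w k) = ((ss k : ℝ) : ℂ) • w k := by
    intro k
    apply WithLp.ofLp_injective 2
    show blk 0 B Bᴴ 0 *ᵥ ⇑(w k) = ((ss k : ℝ) : ℂ) • ⇑(w k)
    simp only [hw, WithLp.ofLp_toLp]
    rw [blk_mulVec, smul_glue, Matrix.zero_mulVec, Matrix.zero_mulVec, zero_add, add_zero]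
    have h5 : (ss k : ℂ) * (ss k : ℂ) = (tt k : ℂ) := by
      rw [← Complex.ofReal_mul]
      norm_cast
      nlinarith [hsssq k]
    have hc1 : B *ᵥ (((r k * ss k : ℝ) : ℂ) • vf k)
        = ((ss k : ℝ) : ℂ) • (((r k : ℝ) : ℂ) • (B *ᵥ vf k)) := by
      rw [Matrix.mulVec_smul, smul_smul]
      congr 1
      push_cast
      ring
    have hc2 : Bᴴ *ᵥ (((r k : ℝ) : ℂ) • (B *ᵥ vf k))
        = ((ss k : ℝ) : ℂ) • (((r k * ss k : ℝ) : ℂ) • vf k) := by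
      rw [Matrix.mulVec_smul, Matrix.mulVec_mulVec, hvfE k, smul_smul, smul_smul]
      congr 1
      push_cast
      rw [← h5]
      ring
    rw [hc1, hc2]
  set V := Submodule.span ℂ (Set.range w) with hV
  have hVrank : Module.finrank ℂ V = (j : ℕ) + 1 := by
    rw [hV, finrank_span_eq_card hwON.linearIndependent]
    simp
  have hjV : ((Fin.castAdd n j : Fin (n + n)) : ℕ) < Module.finrank ℂ V := by
    rw [hVrank]
    simp
  obtain ⟨x, hxV, hx0, hxle⟩ := exists_low_rayleigh hD (Fin.castAdd n j) V hjV
  have hxW : x ∈ Submodule.span ℂ (Set.range w) := hV ▸ hxV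
  have hlow : Real.sqrt (t j) * ‖x‖ ^ 2 ≤
      (inner ℂ x (Matrix.toEuclideanLin (blk 0 B Bᴴ 0) x) : ℂ).re :=
    le_rayleigh _ w hwON ss hwE hssj hxW
  have hmid : (inner ℂ x (Matrix.toEuclideanLin (blk 0 B Bᴴ 0) x) : ℂ).re ≤
      (inner ℂ x (Matrix.toEuclideanLin (blk A 0 0 C) x) : ℂ).re := by
    have h1 : (inner ℂ x (Matrix.toEuclideanLin (blk 0 B Bᴴ 0) x) : ℂ)
        = star ⇑x ⬝ᵥ (blk 0 B Bᴴ 0 *ᵥ ⇑x) := by rw [dotProduct_comm]; rfl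
    have h2 : (inner ℂ x (Matrix.toEuclideanLin (blk A 0 0 C) x) : ℂ)
        = star ⇑x ⬝ᵥ (blk A 0 0 C *ᵥ ⇑x) := by rw [dotProduct_comm]; rfl
    rw [h1, h2]
    exact key_ineq h x
  have hnx : (0:ℝ) < ‖x‖ ^ 2 := pow_pos (norm_pos_iff.mpr hx0) 2
  have hsμ : Real.sqrt (t j) ≤ μ := by
    have hchain := le_trans hlow (le_trans hmid hxle)
    exact le_of_mul_le_mul_right hchain hnx
  have hμ0 : 0 ≤ μ := le_trans (Real.sqrt_nonneg _) hsμ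
  have hDD := Matrix.isHermitian_conjTranspose_mul_self (blk A 0 0 C)
  have hjn2 : (j : ℕ) + 1 ≤ n + n := by omega
  set u2 : Fin ((j : ℕ) + 1) → EuclideanSpace ℂ (Fin (n + n)) :=
    fun k => hD.eigenvectorBasis (Tuple.sort hD.eigenvalues (Fin.castLE hjn2 k).rev) with hu2
  set d2 : Fin ((j : ℕ) + 1) → ℝ :=
    fun k => hD.eigenvalues (Tuple.sort hD.eigenvalues (Fin.castLE hjn2 k).rev) with hd2
  have hd2μ : ∀ k, μ ≤ d2 k := by
    intro k
    refine Tuple.monotone_sort hD.eigenvalues ?_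
    rw [Fin.rev_le_rev, Fin.le_def]
    simpa using Nat.lt_succ_iff.mp k.2
  have hu2ON : Orthonormal ℂ u2 :=
    hD.eigenvectorBasis.orthonormal.comp _
      ((Tuple.sort hD.eigenvalues).injective.comp
        (Fin.rev_injective.comp (Fin.castLE_injective hjn2)))
  have hDv : ∀ k, blk A 0 0 C *ᵥ u2 k = ((d2 k : ℝ) : ℂ) • u2 k := by
    intro k
    have h1 := hD.mulVec_eigenvectorBasis (Tuple.sort hD.eigenvalues (Fin.castLE hjn2 k).rev)
    rw [RCLike.real_smul_eq_coe_smul (K := ℂ)] at h1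
    exact h1
  have hu2E : ∀ k, Matrix.toEuclideanLin ((blk A 0 0 C)ᴴ * blk A 0 0 C) (u2 k)
      = ((d2 k ^ 2 : ℝ) : ℂ) • u2 k := by
    intro k
    apply WithLp.ofLp_injective 2
    show ((blk A 0 0 C)ᴴ * blk A 0 0 C) *ᵥ ⇑(u2 k) = ((d2 k ^ 2 : ℝ) : ℂ) • ⇑(u2 k)
    rw [← Matrix.mulVec_mulVec, hDv k, Matrix.mulVec_smul, hD.eq, hDv k, smul_smul]
    congr 1
    push_cast
    ring
  set V2 := Submodule.span ℂ (Set.range u2) with hV2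
  have hjV2 : ((Fin.castAdd n j : Fin (n + n)) : ℕ) < Module.finrank ℂ V2 := by
    rw [hV2, finrank_span_eq_card hu2ON.linearIndependent]
    simp
  obtain ⟨y, hyV, hy0, hyle⟩ := exists_low_rayleigh hDD (Fin.castAdd n j) V2 hjV2
  have hylow : μ ^ 2 * ‖y‖ ^ 2 ≤
      (inner ℂ y (Matrix.toEuclideanLin ((blk A 0 0 C)ᴴ * blk A 0 0 C) y) : ℂ).re :=
    le_rayleigh _ u2 hu2ON (fun k => d2 k ^ 2) hu2E
      (fun k => show μ ^ 2 ≤ d2 k ^ 2 by nlinarith [hd2μ k, hμ0]) (hV2 ▸ hyV)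
  have hny : (0:ℝ) < ‖y‖ ^ 2 := pow_pos (norm_pos_iff.mpr hy0) 2
  have hfin : μ ^ 2 ≤ hDD.eigenvalues (Tuple.sort hDD.eigenvalues (Fin.castAdd n j).rev) :=
    le_of_mul_le_mul_right (le_trans hylow hyle) hny
  have hsv2 : sv (blk A 0 0 C) (Fin.castAdd n j) =
      Real.sqrt (hDD.eigenvalues (Tuple.sort hDD.eigenvalues (Fin.castAdd n j).rev)) := rfl
  rw [hsvB, hsv2]
  calc Real.sqrt (t j) ≤ μ := hsμ
    _ = Real.sqrt (μ ^ 2) := (Real.sqrt_sq hμ0).symm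
    _ ≤ Real.sqrt (hDD.eigenvalues (Tuple.sort hDD.eigenvalues (Fin.castAdd n j).rev)) :=
        Real.sqrt_le_sqrt hfin
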